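/- (Split–merge lower bound, small-m case, with quantitative form) Let K ≥ 3, 1 ≤ β < √(5/3), and let σ₀, σ be β-balanced labelings [n]→[K] (every community of each has size between n/(βK) and βn/K) with d(σ,σ₀) = m ≤ n/(2βK), where d is Hamming distance minimized over label permutations. Then both the split count α(σ;σ₀) and the merge count γ(σ;σ₀) are at least nm/(βK) − m². -/

import Mathlib

open Finset

lemma pair_count {α : Type*} [Fintype α] [LinearOrder α] [DecidableEq α]
    (D : Finset α) (r Q : α → α → Prop) [DecidableRel r] [DecidableRel Q]
    (hQs : ∀ i j, Q i j → Q j i)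
    (h : ∀ i ∈ D, ∀ j ∉ D, r i j → Q i j) :
    ∑ i ∈ D, (univ.filter (fun j => j ∉ D ∧ r i j)).card
      ≤ (univ.filter (fun p : α × α => p.1 < p.2 ∧ Q p.1 p.2)).card := by
  classical
  set T : Finset (α × α) :=
    univ.filter (fun p : α × α => p.1 ∈ D ∧ p.2 ∉ D ∧ r p.1 p.2) with hT
  have hcardT : T.card = ∑ i ∈ D, (univ.filter (fun j => j ∉ D ∧ r i j)).card := by
    rw [Finset.card_eq_sum_card_fiberwise (f := Prod.fst) (t := D)
      (fun p hp => by simp [hT] at hp; exact hp.1)]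
    refine Finset.sum_congr rfl fun i hi => ?_
    refine Finset.card_bij' (fun p _ => p.2) (fun j _ => (i, j)) ?_ ?_ ?_ ?_
    · intro p hp
      simp only [hT, mem_filter, mem_univ, true_and] at hp ⊢
      exact ⟨hp.1.2.1, hp.2 ▸ hp.1.2.2⟩
    · intro j hj
      simp only [hT, mem_filter, mem_univ, true_and] at hj ⊢
      exact ⟨⟨hi, hj.1, hj.2⟩, trivial⟩
    · intro p hp
      simp only [hT, mem_filter] at hp
      exact Prod.ext hp.2.symm rfl
    · intro j hj; rfl
  rw [← hcardT]
  apply Finset.card_le_card_of_injOn (fun p => if p.1 < p.2 then p else (p.2, p.1))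
  · intro p hp
    simp only [hT, mem_coe, mem_filter, mem_univ, true_and] at hp
    have hQ : Q p.1 p.2 := h p.1 hp.1 p.2 hp.2.1 hp.2.2
    have hne : p.1 ≠ p.2 := fun e => hp.2.1 (e ▸ hp.1)
    rcases hne.lt_or_gt with hlt | hlt
    · simp only [if_pos hlt, mem_coe, mem_filter, mem_univ, true_and]
      exact ⟨hlt, hQ⟩
    · simp only [if_neg (not_lt.2 hlt.le), mem_coe, mem_filter, mem_univ, true_and]
      exact ⟨hlt, hQs _ _ hQ⟩
  · intro p hp q hq hpq
    simp only [hT, coe_filter, Set.mem_setOf_eq, mem_univ, true_and] at hp hq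
    have hpne : p.1 ≠ p.2 := fun e => hp.2.1 (e ▸ hp.1)
    have hqne : q.1 ≠ q.2 := fun e => hq.2.1 (e ▸ hq.1)
    simp only at hpq
    split_ifs at hpq with h1 h2 h2
    · exact hpq
    · -- p sorted, q = swap: p = (q.2, q.1) so p.1 = q.2 ∈ D but q.2 ∉ D
      exfalso
      have : p.1 = q.2 := congrArg Prod.fst hpq
      exact hq.2.1 (this ▸ hp.1)
    · exfalso
      have : q.1 = p.2 := (congrArg Prod.fst hpq).symm
      exact hp.2.1 (this ▸ hq.1)
    · have e1 : p.2 = q.2 := congrArg Prod.fst hpq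
      have e2 : p.1 = q.1 := congrArg Prod.snd hpq
      exact Prod.ext e2 e1

theorem stmt18 (n K : ℕ) (hK : 3 ≤ K)
    (β : ℝ) (hβ1 : 1 ≤ β) (hβ2 : β < Real.sqrt (5/3))
    (σ₀ σ : Fin n → Fin K)
    (hbal₀ : ∀ c : Fin K,
      (n:ℝ)/(β*K) ≤ ((Finset.univ.filter (fun i => σ₀ i = c)).card : ℝ) ∧
      ((Finset.univ.filter (fun i => σ₀ i = c)).card : ℝ) ≤ β*n/K)
    (hbal : ∀ c : Fin K,
      (n:ℝ)/(β*K) ≤ ((Finset.univ.filter (fun i => σ i = c)).card : ℝ) ∧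
      ((Finset.univ.filter (fun i => σ i = c)).card : ℝ) ≤ β*n/K)
    (m : ℕ)
    (hm : m = Finset.univ.inf' ⟨1, Finset.mem_univ 1⟩
      (fun π : Equiv.Perm (Fin K) =>
        (Finset.univ.filter (fun i => σ i ≠ π (σ₀ i))).card))
    (hmsmall : (m:ℝ) ≤ (n:ℝ)/(2*β*K)) :
    ((n:ℝ)*m/(β*K) - (m:ℝ)^2
        ≤ ((Finset.univ.filter (fun p : Fin n × Fin n =>
            p.1 < p.2 ∧ σ₀ p.1 = σ₀ p.2 ∧ σ p.1 ≠ σ p.2)).card : ℝ)) ∧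
    ((n:ℝ)*m/(β*K) - (m:ℝ)^2
        ≤ ((Finset.univ.filter (fun p : Fin n × Fin n =>
            p.1 < p.2 ∧ σ₀ p.1 ≠ σ₀ p.2 ∧ σ p.1 = σ p.2)).card : ℝ)) := by
  classical
  have hne : (Finset.univ : Finset (Equiv.Perm (Fin K))).Nonempty :=
    ⟨1, Finset.mem_univ 1⟩
  obtain ⟨π, -, hπ⟩ := Finset.exists_mem_eq_inf' hne
    (fun π : Equiv.Perm (Fin K) =>
      (Finset.univ.filter (fun i => σ i ≠ π (σ₀ i))).card)
  set D : Finset (Fin n) := univ.filter (fun i => σ i ≠ π (σ₀ i)) with hDdef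
  have hD : (D.card : ℝ) = m := by rw [hm, hπ]
  have hiD : ∀ i ∈ D, σ i ≠ π (σ₀ i) := fun i hi => (mem_filter.1 hi).2
  have hjD : ∀ j ∉ D, σ j = π (σ₀ j) := by
    intro j hj
    by_contra hne
    exact hj (mem_filter.2 ⟨mem_univ j, hne⟩)
  -- generic fiber lower bound
  have fiber_bound : ∀ (τ : Fin n → Fin K)
      (hτ : ∀ c, (n:ℝ)/(β*K) ≤ ((univ.filter (fun i => τ i = c)).card : ℝ))
      (i : Fin n),
      (n:ℝ)/(β*K) - m ≤ ((univ.filter (fun j => j ∉ D ∧ τ i = τ j)).card : ℝ) := by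
    intro τ hτ i
    have hsub : (univ.filter (fun j => τ j = τ i)) ⊆
        (univ.filter (fun j => j ∉ D ∧ τ i = τ j)) ∪ D := by
      intro j hj
      rw [mem_filter] at hj
      by_cases hjd : j ∈ D
      · exact mem_union_right _ hjd
      · exact mem_union_left _ (mem_filter.2 ⟨mem_univ j, hjd, hj.2.symm⟩)
    have h1 : ((univ.filter (fun j => τ j = τ i)).card : ℝ)
        ≤ ((univ.filter (fun j => j ∉ D ∧ τ i = τ j)).card : ℝ) + m := by
      rw [← hD]
      exact_mod_cast le_trans (Finset.card_le_card hsub) (Finset.card_union_le _ _)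
    linarith [hτ (τ i)]
  -- generic sum lower bound
  have sum_bound : ∀ (τ : Fin n → Fin K)
      (hτ : ∀ c, (n:ℝ)/(β*K) ≤ ((univ.filter (fun i => τ i = c)).card : ℝ)),
      (n:ℝ)*m/(β*K) - (m:ℝ)^2
        ≤ ((∑ i ∈ D, (univ.filter (fun j => j ∉ D ∧ τ i = τ j)).card : ℕ) : ℝ) := by
    intro τ hτ
    push_cast
    calc (n:ℝ)*m/(β*K) - (m:ℝ)^2
        = ∑ _i ∈ D, ((n:ℝ)/(β*K) - m) := by
          rw [Finset.sum_const, nsmul_eq_mul, hD]; ring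
      _ ≤ ∑ i ∈ D, ((univ.filter (fun j => j ∉ D ∧ τ i = τ j)).card : ℝ) :=
          Finset.sum_le_sum (fun i _ => fiber_bound τ hτ i)
  constructor
  · -- split pairs
    have key := pair_count D (fun a b => σ₀ a = σ₀ b)
      (fun a b => σ₀ a = σ₀ b ∧ σ a ≠ σ b)
      (fun i j h => ⟨h.1.symm, fun e => h.2 e.symm⟩)
      (by
        intro i hi j hj hr
        refine ⟨hr, ?_⟩
        have := hjD j hj
        rw [this, ← hr]
        exact hiD i hi)
    have hset : (univ.filter (fun p : Fin n × Fin n =>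
        p.1 < p.2 ∧ (fun a b => σ₀ a = σ₀ b ∧ σ a ≠ σ b) p.1 p.2))
        = (univ.filter (fun p : Fin n × Fin n =>
            p.1 < p.2 ∧ σ₀ p.1 = σ₀ p.2 ∧ σ p.1 ≠ σ p.2)) := by
      ext p; simp [and_assoc]
    rw [hset] at key
    calc (n:ℝ)*m/(β*K) - (m:ℝ)^2
        ≤ ((∑ i ∈ D, (univ.filter (fun j => j ∉ D ∧ σ₀ i = σ₀ j)).card : ℕ) : ℝ) :=
          sum_bound σ₀ (fun c => (hbal₀ c).1)
      _ ≤ _ := by exact_mod_cast key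
  · -- merge pairs
    have key := pair_count D (fun a b => σ a = σ b)
      (fun a b => σ₀ a ≠ σ₀ b ∧ σ a = σ b)
      (fun i j h => ⟨fun e => h.1 e.symm, h.2.symm⟩)
      (by
        intro i hi j hj hr
        refine ⟨?_, hr⟩
        intro he
        apply hiD i hi
        rw [he, ← hjD j hj, hr])
    have hset : (univ.filter (fun p : Fin n × Fin n =>
        p.1 < p.2 ∧ (fun a b => σ₀ a ≠ σ₀ b ∧ σ a = σ b) p.1 p.2))
        = (univ.filter (fun p : Fin n × Fin n =>
            p.1 < p.2 ∧ σ₀ p.1 ≠ σ₀ p.2 ∧ σ p.1 = σ p.2)) := by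
      ext p; simp [and_assoc]
    rw [hset] at key
    calc (n:ℝ)*m/(β*K) - (m:ℝ)^2
        ≤ ((∑ i ∈ D, (univ.filter (fun j => j ∉ D ∧ σ i = σ j)).card : ℕ) : ℝ) :=
          sum_bound σ (fun c => (hbal c).1)
      _ ≤ _ := by exact_mod_cast key
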